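/- arXiv:2008.09944 — 3 statements merged into one kernel-verified Lean document; each statement's English description precedes it below -/
import Mathlib

section
/- Let F be a finite field, let d be an even positive integer, and let n1, n2, a1, a2, b1, b2, t1, t2, s be positive integers with n1 + n2 = n, a1 + a2 = k, b1 + b2 ≥ d/2, and for i = 1,2: a_i ≤ t_i ≤ n_i − d/2, n_i ≥ k, a_i ≥ d/2, 1 ≤ b_i ≤ d/2. For i = 1,2 let Q_i be a set of a_i × t_i matrices over F of rank a_i whose row spaces are pairwise distinct and satisfy dim(R(G) ∩ R(G')) ≤ a_i − d/2 for all distinct G, G' ∈ Q_i. Let M_{1,2} be a set of a1 × (n2 − t2) matrices with pairwise rank distance ≥ d/2 each of rank ≤ a1 − d/2, and M_{2,1} a set of a2 × (n1 − t1) matrices with pairwise rank distance ≥ d/2 each of rank ≤ a2 − d/2. For r = 1,…,s let M_{1,1}^r be a set of a1 × (n1 − t1) matrices with pairwise rank distance ≥ d/2 and M_{2,2}^r a set of a2 × (n2 − t2) matrices with pairwise rank distance ≥ d/2, such that for all r ≠ r', i ∈ {1,2}, M ∈ M_{i,i}^r and M' ∈ M_{i,i}^{r'}, one has M ≠ M'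 and rank(M − M') ≥ b_i. Let B_r be the set of row spaces of the k × n block matrices with row blocks of sizes a1, a2 and column blocks of sizes t1, n1−t1, t2, n2−t2 given by ( G_1, M_{1,1}, 0, M_{1,2} ; 0, M_{2,1}, G_2, M_{2,2} ), where G_i ∈ Q_i, M_{i,i} ∈ M_{i,i}^r, M_{1,2} ∈ M_{1,2}, M_{2,1} ∈ M_{2,1}. Then every element of B = ∪_{r=1}^s B_r is a k-dimensional subspace of F^n, and any two subspaces in B arising from different generator data satisfy dim(W_1 ∩ W_2) ≤ k − d/2; that is, B is an (n,*,d,k) constant dimension code. -/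
open Matrix

/-- The row space of a matrix: the span of its rows, i.e. the range of `vecMul`. -/
noncomputable def rowSpace {F : Type*} [Field F] {m n : Type*} [Fintype m]
    (A : Matrix m n F) : Submodule F (n → F) :=
  LinearMap.range A.vecMulLinear

/-- The generator matrix `( G1, M11, 0, M12 ; 0, M21, G2, M22 )` with row blocks of
sizes `a1, a2` and column blocks of sizes `t1, p1, t2, p2`. -/
def gen7 {F : Type*} [Field F] {a1 a2 t1 t2 p1 p2 : ℕ}
    (G1 : Matrix (Fin a1) (Fin t1) F) (M11 : Matrix (Fin a1) (Fin p1) F)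
    (M12 : Matrix (Fin a1) (Fin p2) F) (M21 : Matrix (Fin a2) (Fin p1) F)
    (G2 : Matrix (Fin a2) (Fin t2) F) (M22 : Matrix (Fin a2) (Fin p2) F) :
    Matrix (Fin a1 ⊕ Fin a2) ((Fin t1 ⊕ Fin p1) ⊕ (Fin t2 ⊕ Fin p2)) F :=
  Matrix.fromBlocks (Matrix.fromCols G1 M11) (Matrix.fromCols 0 M12)
    (Matrix.fromCols 0 M21) (Matrix.fromCols G2 M22)

section Helpers

open Module Submodule

variable {F : Type*} [Field F]

/-- Rank-nullity for a restriction. -/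
lemma finrank_map_add_finrank_inf_ker {V W : Type*} [AddCommGroup V] [Module F V]
    [AddCommGroup W] [Module F W] [FiniteDimensional F V]
    (U : Submodule F V) (f : V →ₗ[F] W) :
    finrank F ↥(U.map f) + finrank F ↥(U ⊓ LinearMap.ker f) = finrank F ↥U := by
  have h := LinearMap.finrank_range_add_finrank_ker (f.domRestrict U)
  rw [LinearMap.range_domRestrict] at h
  have hker : LinearMap.ker (f.domRestrict U) = Submodule.comap U.subtype
      (U ⊓ LinearMap.ker f) := by
    rw [LinearMap.ker_domRestrict]
    ext x
    simp [x.2]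
  rw [hker, (Submodule.comapSubtypeEquivOfLe (inf_le_left :
    U ⊓ LinearMap.ker f ≤ U)).finrank_eq] at h
  exact h

/-- Lower bound for the rank of an upper block triangular matrix. -/
lemma rank_fromBlocks_zero21_ge {m1 m2 n1 n2 : Type*} [Fintype m1] [Fintype m2]
    [Fintype n1] [Fintype n2]
    (A : Matrix m1 n1 F) (B : Matrix m1 n2 F) (D : Matrix m2 n2 F) :
    A.rank + D.rank ≤ (fromBlocks A B 0 D).rank := by
  classical
  set M := fromBlocks A B (0 : Matrix m2 n1 F) D with hM
  let π : ((m1 ⊕ m2) → F) →ₗ[F] (m2 → F) := LinearMap.funLeft F F Sum.inr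
  let j : (m1 → F) →ₗ[F] ((m1 ⊕ m2) → F) :=
    { toFun := fun v => Sum.elim v 0
      map_add' := by intro v w; funext x; cases x <;> simp
      map_smul' := by intro c v; funext x; cases x <;> simp }
  have hj : Function.Injective j := by
    intro v w h
    funext i
    exact congrFun h (Sum.inl i)
  set U := LinearMap.range M.mulVecLin with hU
  have h1 : (LinearMap.range A.mulVecLin).map j ≤ U ⊓ LinearMap.ker π := by
    rintro x ⟨y, ⟨v, rfl⟩, rfl⟩
    refine ⟨⟨Sum.elim v 0, ?_⟩, ?_⟩
    · show M *ᵥ Sum.elim v 0 = j (A.mulVecLin v)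
      funext i
      cases i <;>
        simp [M, Matrix.fromBlocks_mulVec, j, Sum.elim_comp_inl, Sum.elim_comp_inr]
    · show π (j (A.mulVecLin v)) = 0
      funext i
      simp [π, j, LinearMap.funLeft]
  have h2 : LinearMap.range D.mulVecLin ≤ U.map π := by
    rintro x ⟨y, rfl⟩
    refine ⟨M *ᵥ Sum.elim 0 y, ⟨Sum.elim 0 y, rfl⟩, ?_⟩
    funext i
    simp [M, π, Matrix.fromBlocks_mulVec, LinearMap.funLeft, Sum.elim_comp_inl,
      Sum.elim_comp_inr]
  have h3 := finrank_map_add_finrank_inf_ker U π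
  have h4 : finrank F ↥((LinearMap.range A.mulVecLin).map j) = A.rank :=
    ((LinearMap.range A.mulVecLin).equivMapOfInjective j hj).finrank_eq.symm
  have h5 : A.rank ≤ finrank F ↥(U ⊓ LinearMap.ker π) := by
    rw [← h4]; exact Submodule.finrank_mono h1
  have h6 : D.rank ≤ finrank F ↥(U.map π) := Submodule.finrank_mono h2
  have h7 : M.rank = finrank F ↥U := rfl
  omega

lemma rank_submatrix_col_le {m n n' : Type*} [Fintype m] [Fintype n] [Fintype n']
    [DecidableEq n] (A : Matrix m n F) (f : n' → n) :
    (A.submatrix id f).rank ≤ A.rank := by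
  have h : A.submatrix id f = A * (1 : Matrix n n F).submatrix id f := by
    ext i k
    simp [Matrix.mul_apply, Matrix.one_apply]
  rw [h]
  exact Matrix.rank_mul_le_left _ _

lemma rank_submatrix_row_le {m m' n : Type*} [Fintype m] [Fintype m'] [Fintype n]
    [DecidableEq m] (A : Matrix m n F) (g : m' → m) :
    (A.submatrix g id).rank ≤ A.rank := by
  have h : A.submatrix g id = (1 : Matrix m m F).submatrix g id * A := by
    ext i k
    simp [Matrix.mul_apply, Matrix.one_apply]
  rw [h]
  exact Matrix.rank_mul_le_right _ _

lemma rank_submatrix_le' {m n m' n' : Type*} [Fintype m] [Fintype n] [Fintype m']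
    [Fintype n'] (A : Matrix m n F) (g : m' → m) (f : n' → n) :
    (A.submatrix g f).rank ≤ A.rank := by
  classical
  have h : A.submatrix g f = (A.submatrix g id).submatrix id f := by
    ext i k; rfl
  rw [h]
  exact (rank_submatrix_col_le _ _).trans (rank_submatrix_row_le _ _)

lemma finrank_rowSpace_eq_rank {m n : Type*} [Fintype m] [Fintype n]
    (A : Matrix m n F) : finrank F ↥(rowSpace A) = A.rank := by
  rw [rowSpace, range_vecMulLinear, Matrix.rank_eq_finrank_span_row]

lemma rowSpace_fromRows {m1 m2 n : Type*} [Fintype m1] [Fintype m2] [Fintype n]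
    (A : Matrix m1 n F) (B : Matrix m2 n F) :
    rowSpace (fromRows A B) = rowSpace A ⊔ rowSpace B := by
  apply le_antisymm
  · rintro x ⟨v, rfl⟩
    have hv : v = Sum.elim (v ∘ Sum.inl) (v ∘ Sum.inr) := by
      funext i; cases i <;> rfl
    rw [Matrix.vecMulLinear_apply, hv, Matrix.sumElim_vecMul_fromRows]
    exact Submodule.add_mem_sup ⟨_, rfl⟩ ⟨_, rfl⟩
  · apply sup_le
    · rintro x ⟨v, rfl⟩
      exact ⟨Sum.elim v 0, by simp⟩
    · rintro x ⟨v, rfl⟩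
      exact ⟨Sum.elim 0 v, by simp⟩

lemma rowSpace_sup_sub {m n : Type*} [Fintype m] [Fintype n] (A B : Matrix m n F) :
    rowSpace A ⊔ rowSpace B = rowSpace A ⊔ rowSpace (B - A) := by
  apply le_antisymm
  · apply sup_le le_sup_left
    rintro x ⟨v, rfl⟩
    have hv : B.vecMulLinear v = A.vecMulLinear v + (B - A).vecMulLinear v := by
      simp only [Matrix.vecMulLinear_apply, Matrix.vecMul_sub]
      abel
    rw [hv]
    exact Submodule.add_mem_sup ⟨_, rfl⟩ ⟨_, rfl⟩
  · apply sup_le le_sup_left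
    rintro x ⟨v, rfl⟩
    have hv : (B - A).vecMulLinear v = B.vecMulLinear v - A.vecMulLinear v := by
      simp [Matrix.vecMul_sub]
    rw [hv]
    exact Submodule.sub_mem _ (Submodule.mem_sup_right ⟨_, rfl⟩)
      (Submodule.mem_sup_left ⟨_, rfl⟩)

variable {a1 a2 t1 t2 p1 p2 : ℕ}

lemma gen7_submatrix_T (G1 : Matrix (Fin a1) (Fin t1) F) (M11 : Matrix (Fin a1) (Fin p1) F)
    (M12 : Matrix (Fin a1) (Fin p2) F) (M21 : Matrix (Fin a2) (Fin p1) F)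
    (G2 : Matrix (Fin a2) (Fin t2) F) (M22 : Matrix (Fin a2) (Fin p2) F) :
    (gen7 G1 M11 M12 M21 G2 M22).submatrix id (Sum.map Sum.inl Sum.inl) =
      fromBlocks G1 0 0 G2 := by
  ext i j
  rcases i with i | i <;> rcases j with j | j <;>
    simp [gen7, Matrix.fromCols]

lemma gen7_sub_gen7 (G1 G1' : Matrix (Fin a1) (Fin t1) F)
    (M11 M11' : Matrix (Fin a1) (Fin p1) F) (M12 M12' : Matrix (Fin a1) (Fin p2) F)
    (M21 M21' : Matrix (Fin a2) (Fin p1) F) (G2 G2' : Matrix (Fin a2) (Fin t2) F)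
    (M22 M22' : Matrix (Fin a2) (Fin p2) F) :
    gen7 G1' M11' M12' M21' G2' M22' - gen7 G1 M11 M12 M21 G2 M22 =
      gen7 (G1' - G1) (M11' - M11) (M12' - M12) (M21' - M21) (G2' - G2) (M22' - M22) := by
  ext i j
  rcases i with i | i <;> rcases j with (j | j) | (j | j) <;>
    simp [gen7, Matrix.fromCols]

lemma rank_gen7_eq (G1 : Matrix (Fin a1) (Fin t1) F) (M11 : Matrix (Fin a1) (Fin p1) F)
    (M12 : Matrix (Fin a1) (Fin p2) F) (M21 : Matrix (Fin a2) (Fin p1) F)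
    (G2 : Matrix (Fin a2) (Fin t2) F) (M22 : Matrix (Fin a2) (Fin p2) F)
    (h1 : G1.rank = a1) (h2 : G2.rank = a2) :
    (gen7 G1 M11 M12 M21 G2 M22).rank = a1 + a2 := by
  refine le_antisymm ?_ ?_
  · refine le_trans (Matrix.rank_le_card_height _) ?_
    simp
  · calc a1 + a2 = G1.rank + G2.rank := by rw [h1, h2]
      _ ≤ (fromBlocks G1 (0 : Matrix (Fin a1) (Fin t2) F) 0 G2).rank :=
        rank_fromBlocks_zero21_ge G1 0 G2
      _ = ((gen7 G1 M11 M12 M21 G2 M22).submatrix id (Sum.map Sum.inl Sum.inl)).rank := by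
        rw [gen7_submatrix_T]
      _ ≤ _ := rank_submatrix_le' _ _ _

/-- Selecting the `t1` and `t2` column blocks from stacked generator matrices. -/
lemma fromRows_gen7_submatrix_T (G1 G1' : Matrix (Fin a1) (Fin t1) F)
    (M11 M11' : Matrix (Fin a1) (Fin p1) F) (M12 M12' : Matrix (Fin a1) (Fin p2) F)
    (M21 M21' : Matrix (Fin a2) (Fin p1) F) (G2 G2' : Matrix (Fin a2) (Fin t2) F)
    (M22 M22' : Matrix (Fin a2) (Fin p2) F) :
    (fromRows (gen7 G1 M11 M12 M21 G2 M22) (gen7 G1' M11' M12' M21' G2' M22')).submatrix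
        (Sum.elim (Sum.elim (Sum.inl ∘ Sum.inl) (Sum.inr ∘ Sum.inl))
          (Sum.elim (Sum.inl ∘ Sum.inr) (Sum.inr ∘ Sum.inr)))
        (Sum.map Sum.inl Sum.inl) =
      fromBlocks (fromRows G1 G1') 0 0 (fromRows G2 G2') := by
  ext i j
  rcases i with (i | i) | (i | i) <;> rcases j with j | j <;>
    simp [gen7, Matrix.fromCols, Matrix.fromRows_apply_inl, Matrix.fromRows_apply_inr]

/-- Reordering the columns of the stacked matrix `[gen ; Δ]` into block triangular form. -/
lemma fromRows_gen7_delta (G1 : Matrix (Fin a1) (Fin t1) F)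
    (M11 D11 : Matrix (Fin a1) (Fin p1) F) (M12 D12 : Matrix (Fin a1) (Fin p2) F)
    (M21 D21 : Matrix (Fin a2) (Fin p1) F) (G2 : Matrix (Fin a2) (Fin t2) F)
    (M22 D22 : Matrix (Fin a2) (Fin p2) F) :
    (fromRows (gen7 G1 M11 M12 M21 G2 M22) (gen7 0 D11 D12 D21 0 D22)).submatrix id
        (Sum.elim (Sum.elim (Sum.inl ∘ Sum.inl) (Sum.inr ∘ Sum.inl))
          (Sum.elim (Sum.inl ∘ Sum.inr) (Sum.inr ∘ Sum.inr))) =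
      fromBlocks (fromBlocks G1 0 0 G2) (fromBlocks M11 M12 M21 M22) 0
        (fromBlocks D11 D12 D21 D22) := by
  ext i j
  rcases i with (i | i) | (i | i) <;> rcases j with (j | j) | (j | j) <;>
    simp [gen7, Matrix.fromCols, Matrix.fromRows_apply_inl, Matrix.fromRows_apply_inr]

lemma rank_block11_le {m1 m2 n1 n2 : Type*} [Fintype m1] [Fintype m2] [Fintype n1]
    [Fintype n2] (A : Matrix m1 n1 F) (B : Matrix m1 n2 F) (C : Matrix m2 n1 F)
    (D : Matrix m2 n2 F) : A.rank ≤ (fromBlocks A B C D).rank := by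
  have h : (fromBlocks A B C D).submatrix Sum.inl Sum.inl = A := by
    ext i j; rfl
  rw [← h]
  exact rank_submatrix_le' _ _ _

lemma rank_block12_le {m1 m2 n1 n2 : Type*} [Fintype m1] [Fintype m2] [Fintype n1]
    [Fintype n2] (A : Matrix m1 n1 F) (B : Matrix m1 n2 F) (C : Matrix m2 n1 F)
    (D : Matrix m2 n2 F) : B.rank ≤ (fromBlocks A B C D).rank := by
  have h : (fromBlocks A B C D).submatrix Sum.inl Sum.inr = B := by
    ext i j; rfl
  rw [← h]
  exact rank_submatrix_le' _ _ _

lemma rank_block21_le {m1 m2 n1 n2 : Type*} [Fintype m1] [Fintype m2] [Fintype n1]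
    [Fintype n2] (A : Matrix m1 n1 F) (B : Matrix m1 n2 F) (C : Matrix m2 n1 F)
    (D : Matrix m2 n2 F) : C.rank ≤ (fromBlocks A B C D).rank := by
  have h : (fromBlocks A B C D).submatrix Sum.inr Sum.inl = C := by
    ext i j; rfl
  rw [← h]
  exact rank_submatrix_le' _ _ _

lemma rank_block22_le {m1 m2 n1 n2 : Type*} [Fintype m1] [Fintype m2] [Fintype n1]
    [Fintype n2] (A : Matrix m1 n1 F) (B : Matrix m1 n2 F) (C : Matrix m2 n1 F)
    (D : Matrix m2 n2 F) : D.rank ≤ (fromBlocks A B C D).rank := by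
  have h : (fromBlocks A B C D).submatrix Sum.inr Sum.inr = D := by
    ext i j; rfl
  rw [← h]
  exact rank_submatrix_le' _ _ _

end Helpers

/-- the multi-blocks construction (Theorem 2.6): block generator matrices
built from small CDCs `Q1, Q2` and rank metric codes (with rank restrictions on the
off-diagonal blocks) have row spaces forming an `(n,*,d,k)` constant dimension code. -/
theorem multi_blocks_construction
    (F : Type*) [Field F] [Fintype F] (d n n1 n2 a1 a2 b1 b2 t1 t2 k s : ℕ)
    (hd : 0 < d) (hd2 : 2 ∣ d) (hs : 0 < s)
    (hn : n1 + n2 = n) (hk : a1 + a2 = k) (hb : d / 2 ≤ b1 + b2)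
    (ht1 : a1 ≤ t1) (ht1' : t1 ≤ n1 - d / 2) (ht2 : a2 ≤ t2) (ht2' : t2 ≤ n2 - d / 2)
    (hn1 : k ≤ n1) (hn2 : k ≤ n2)
    (ha1 : d / 2 ≤ a1) (ha2 : d / 2 ≤ a2)
    (hb1 : 1 ≤ b1) (hb1' : b1 ≤ d / 2) (hb2 : 1 ≤ b2) (hb2' : b2 ≤ d / 2)
    (Q1 : Set (Matrix (Fin a1) (Fin t1) F)) (Q2 : Set (Matrix (Fin a2) (Fin t2) F))
    (hQ1rank : ∀ G ∈ Q1, G.rank = a1)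
    (hQ1 : ∀ G ∈ Q1, ∀ G' ∈ Q1, G ≠ G' →
      rowSpace G ≠ rowSpace G' ∧
        Module.finrank F ↥(rowSpace G ⊓ rowSpace G') ≤ a1 - d / 2)
    (hQ2rank : ∀ G ∈ Q2, G.rank = a2)
    (hQ2 : ∀ G ∈ Q2, ∀ G' ∈ Q2, G ≠ G' →
      rowSpace G ≠ rowSpace G' ∧
        Module.finrank F ↥(rowSpace G ⊓ rowSpace G') ≤ a2 - d / 2)
    (𝓜12 : Set (Matrix (Fin a1) (Fin (n2 - t2)) F))
    (𝓜21 : Set (Matrix (Fin a2) (Fin (n1 - t1)) F))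
    (𝓜11 : Fin s → Set (Matrix (Fin a1) (Fin (n1 - t1)) F))
    (𝓜22 : Fin s → Set (Matrix (Fin a2) (Fin (n2 - t2)) F))
    (h12 : ∀ M ∈ 𝓜12, ∀ M' ∈ 𝓜12, M ≠ M' → d / 2 ≤ (M - M').rank)
    (h12rank : ∀ M ∈ 𝓜12, M.rank ≤ a1 - d / 2)
    (h21 : ∀ M ∈ 𝓜21, ∀ M' ∈ 𝓜21, M ≠ M' → d / 2 ≤ (M - M').rank)
    (h21rank : ∀ M ∈ 𝓜21, M.rank ≤ a2 - d / 2)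
    (h11 : ∀ r, ∀ M ∈ 𝓜11 r, ∀ M' ∈ 𝓜11 r, M ≠ M' → d / 2 ≤ (M - M').rank)
    (h22 : ∀ r, ∀ M ∈ 𝓜22 r, ∀ M' ∈ 𝓜22 r, M ≠ M' → d / 2 ≤ (M - M').rank)
    (h11cross : ∀ r r', r ≠ r' → ∀ M ∈ 𝓜11 r, ∀ M' ∈ 𝓜11 r',
      M ≠ M' ∧ b1 ≤ (M - M').rank)
    (h22cross : ∀ r r', r ≠ r' → ∀ M ∈ 𝓜22 r, ∀ M' ∈ 𝓜22 r',
      M ≠ M' ∧ b2 ≤ (M - M').rank) :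
    (∀ r, ∀ G1 ∈ Q1, ∀ G2 ∈ Q2, ∀ M11 ∈ 𝓜11 r, ∀ M22 ∈ 𝓜22 r,
      ∀ M12 ∈ 𝓜12, ∀ M21 ∈ 𝓜21,
      Module.finrank F ↥(rowSpace (gen7 G1 M11 M12 M21 G2 M22)) = k) ∧
    (∀ r r', ∀ G1 ∈ Q1, ∀ G2 ∈ Q2, ∀ M11 ∈ 𝓜11 r, ∀ M22 ∈ 𝓜22 r,
      ∀ M12 ∈ 𝓜12, ∀ M21 ∈ 𝓜21,
      ∀ G1' ∈ Q1, ∀ G2' ∈ Q2, ∀ M11' ∈ 𝓜11 r', ∀ M22' ∈ 𝓜22 r',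
      ∀ M12' ∈ 𝓜12, ∀ M21' ∈ 𝓜21,
      gen7 G1 M11 M12 M21 G2 M22 ≠ gen7 G1' M11' M12' M21' G2' M22' →
        Module.finrank F
          ↥(rowSpace (gen7 G1 M11 M12 M21 G2 M22) ⊓
              rowSpace (gen7 G1' M11' M12' M21' G2' M22')) ≤ k - d / 2) := by
  classical
  constructor
  · intro r G1 hG1 G2 hG2 M11 hM11 M22 hM22 M12 hM12 M21 hM21
    rw [finrank_rowSpace_eq_rank, rank_gen7_eq G1 M11 M12 M21 G2 M22
      (hQ1rank G1 hG1) (hQ2rank G2 hG2)]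
    exact hk
  · intro r r' G1 hG1 G2 hG2 M11 hM11 M22 hM22 M12 hM12 M21 hM21
      G1' hG1' G2' hG2' M11' hM11' M22' hM22' M12' hM12' M21' hM21' hne
    have hA : (gen7 G1 M11 M12 M21 G2 M22).rank = k :=
      hk ▸ rank_gen7_eq G1 M11 M12 M21 G2 M22 (hQ1rank G1 hG1) (hQ2rank G2 hG2)
    have hA' : (gen7 G1' M11' M12' M21' G2' M22').rank = k :=
      hk ▸ rank_gen7_eq G1' M11' M12' M21' G2' M22' (hQ1rank G1' hG1') (hQ2rank G2' hG2')
    -- it suffices to bound the rank of the stacked matrix from below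
    suffices hS : k + d / 2 ≤ (fromRows (gen7 G1 M11 M12 M21 G2 M22)
        (gen7 G1' M11' M12' M21' G2' M22')).rank by
      have h1 : Module.finrank F ↥(rowSpace (gen7 G1 M11 M12 M21 G2 M22)) = k := by
        rw [finrank_rowSpace_eq_rank]; exact hA
      have h2 : Module.finrank F ↥(rowSpace (gen7 G1' M11' M12' M21' G2' M22')) = k := by
        rw [finrank_rowSpace_eq_rank]; exact hA'
      have h3 := Submodule.finrank_sup_add_finrank_inf_eq
        (rowSpace (gen7 G1 M11 M12 M21 G2 M22))
        (rowSpace (gen7 G1' M11' M12' M21' G2' M22'))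
      have h4 : Module.finrank F ↥(rowSpace (gen7 G1 M11 M12 M21 G2 M22) ⊔
          rowSpace (gen7 G1' M11' M12' M21' G2' M22')) =
          (fromRows (gen7 G1 M11 M12 M21 G2 M22)
            (gen7 G1' M11' M12' M21' G2' M22')).rank := by
        rw [← rowSpace_fromRows, finrank_rowSpace_eq_rank]
      omega
    by_cases hGG : G1 = G1' ∧ G2 = G2'
    · -- the initial blocks agree: use the rank-metric properties
      obtain ⟨hg1, hg2⟩ := hGG
      subst hg1; subst hg2
      -- replace the second set of rows by the difference
      have hsup : (fromRows (gen7 G1 M11 M12 M21 G2 M22)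
            (gen7 G1 M11' M12' M21' G2 M22')).rank =
          (fromRows (gen7 G1 M11 M12 M21 G2 M22)
            (gen7 G1 M11' M12' M21' G2 M22' - gen7 G1 M11 M12 M21 G2 M22)).rank := by
        rw [← finrank_rowSpace_eq_rank, ← finrank_rowSpace_eq_rank,
          rowSpace_fromRows, rowSpace_fromRows, rowSpace_sup_sub]
      have hdel : gen7 G1 M11' M12' M21' G2 M22' - gen7 G1 M11 M12 M21 G2 M22 =
          gen7 0 (M11' - M11) (M12' - M12) (M21' - M21) 0 (M22' - M22) := by
        rw [gen7_sub_gen7, sub_self, sub_self]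
      rw [hsup, hdel]
      -- lower-bound the rank via the block triangular form
      have hsel := fromRows_gen7_delta G1 M11 (M11' - M11) M12 (M12' - M12)
        M21 (M21' - M21) G2 M22 (M22' - M22)
      have hblock := rank_fromBlocks_zero21_ge
        (fromBlocks G1 (0 : Matrix (Fin a1) (Fin t2) F) 0 G2)
        (fromBlocks M11 M12 M21 M22)
        (fromBlocks (M11' - M11) (M12' - M12) (M21' - M21) (M22' - M22))
      have hE : a1 + a2 ≤ (fromBlocks G1 (0 : Matrix (Fin a1) (Fin t2) F) 0 G2).rank := by
        have := rank_fromBlocks_zero21_ge G1 (0 : Matrix (Fin a1) (Fin t2) F) G2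
        rw [hQ1rank G1 hG1, hQ2rank G2 hG2] at this
        exact this
      have hsub : (fromBlocks (fromBlocks G1 (0 : Matrix (Fin a1) (Fin t2) F) 0 G2)
            (fromBlocks M11 M12 M21 M22) 0
            (fromBlocks (M11' - M11) (M12' - M12) (M21' - M21) (M22' - M22))).rank ≤
          (fromRows (gen7 G1 M11 M12 M21 G2 M22)
            (gen7 0 (M11' - M11) (M12' - M12) (M21' - M21) 0 (M22' - M22))).rank := by
        rw [← hsel]
        exact rank_submatrix_le' _ _ _
      -- now show the difference block matrix has rank at least d/2
      have hY : d / 2 ≤ (fromBlocks (M11' - M11) (M12' - M12) (M21' - M21)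
          (M22' - M22)).rank := by
        by_cases h12e : M12 = M12'
        · by_cases h21e : M21 = M21'
          · by_cases hrr : r = r'
            · subst hrr
              by_cases h11e : M11 = M11'
              · by_cases h22e : M22 = M22'
                · exact absurd (by rw [h11e, h12e, h21e, h22e]) hne
                · refine le_trans (h22 r M22' hM22' M22 hM22 (Ne.symm h22e)) ?_
                  exact rank_block22_le _ _ _ _
              · refine le_trans (h11 r M11' hM11' M11 hM11 (Ne.symm h11e)) ?_
                exact rank_block11_le _ _ _ _
            · -- different indices: use the cross conditions
              have hc1 := h11cross r' r (Ne.symm hrr) M11' hM11' M11 hM11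
              have hc2 := h22cross r' r (Ne.symm hrr) M22' hM22' M22 hM22
              have hz12 : M12' - M12 = 0 := by rw [h12e, sub_self]
              have hz21 : M21' - M21 = 0 := by rw [h21e, sub_self]
              rw [hz12, hz21]
              have := rank_fromBlocks_zero21_ge (M11' - M11)
                (0 : Matrix (Fin a1) (Fin (n2 - t2)) F) (M22' - M22)
              have hrk : (fromBlocks (M11' - M11) 0 (0 : Matrix (Fin a2) (Fin (n1 - t1)) F)
                  (M22' - M22)).rank = (fromBlocks (M11' - M11)
                  (0 : Matrix (Fin a1) (Fin (n2 - t2)) F) 0 (M22' - M22)).rank := rfl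
              omega
          · refine le_trans (h21 M21' hM21' M21 hM21 (Ne.symm h21e)) ?_
            exact rank_block21_le _ _ _ _
        · refine le_trans (h12 M12' hM12' M12 hM12 (Ne.symm h12e)) ?_
          exact rank_block12_le _ _ _ _
      omega
    · -- one of the initial blocks differs: use the CDC properties of Q1, Q2
      have hsub : (fromBlocks (fromRows G1 G1') 0 0 (fromRows G2 G2')).rank ≤
          (fromRows (gen7 G1 M11 M12 M21 G2 M22)
            (gen7 G1' M11' M12' M21' G2' M22')).rank := by
        rw [← fromRows_gen7_submatrix_T G1 G1' M11 M11' M12 M12' M21 M21' G2 G2' M22 M22']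
        exact rank_submatrix_le' _ _ _
      have hblock := rank_fromBlocks_zero21_ge (fromRows G1 G1')
        (0 : Matrix (Fin a1 ⊕ Fin a1) (Fin t2) F) (fromRows G2 G2')
      have hfr1 : (fromRows G1 G1').rank =
          Module.finrank F ↥(rowSpace G1 ⊔ rowSpace G1') := by
        rw [← rowSpace_fromRows, finrank_rowSpace_eq_rank]
      have hfr2 : (fromRows G2 G2').rank =
          Module.finrank F ↥(rowSpace G2 ⊔ rowSpace G2') := by
        rw [← rowSpace_fromRows, finrank_rowSpace_eq_rank]
      have hr1 : Module.finrank F ↥(rowSpace G1) = a1 := by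
        rw [finrank_rowSpace_eq_rank]; exact hQ1rank G1 hG1
      have hr1' : Module.finrank F ↥(rowSpace G1') = a1 := by
        rw [finrank_rowSpace_eq_rank]; exact hQ1rank G1' hG1'
      have hr2 : Module.finrank F ↥(rowSpace G2) = a2 := by
        rw [finrank_rowSpace_eq_rank]; exact hQ2rank G2 hG2
      have hr2' : Module.finrank F ↥(rowSpace G2') = a2 := by
        rw [finrank_rowSpace_eq_rank]; exact hQ2rank G2' hG2'
      have hs1 := Submodule.finrank_sup_add_finrank_inf_eq (rowSpace G1) (rowSpace G1')
      have hs2 := Submodule.finrank_sup_add_finrank_inf_eq (rowSpace G2) (rowSpace G2')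
      have hmono1 : Module.finrank F ↥(rowSpace G1) ≤
          Module.finrank F ↥(rowSpace G1 ⊔ rowSpace G1') :=
        Submodule.finrank_mono le_sup_left
      have hmono2 : Module.finrank F ↥(rowSpace G2) ≤
          Module.finrank F ↥(rowSpace G2 ⊔ rowSpace G2') :=
        Submodule.finrank_mono le_sup_left
      by_cases hg1 : G1 = G1'
      · have hg2 : G2 ≠ G2' := fun h => hGG ⟨hg1, h⟩
        have hint := (hQ2 G2 hG2 G2' hG2' hg2).2
        omega
      · have hint := (hQ1 G1 hG1 G1' hG1' hg1).2
        omega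
end

section
/- Let F be a finite field, let d be an even positive integer, and let n = n1 + n2, k = a1 + a2 with a_i ≥ d/2 and a_i ≤ t_i ≤ n_i − a_i for i = 1,2. For i = 1,2 let D_i be a set of a_i × (n_i − t_i) matrices over F of rank a_i whose row spaces are pairwise distinct and satisfy dim(R(G) ∩ R(G')) ≤ a_i − d/2 for all distinct G, G' ∈ D_i. (Case 1) Let b1, b2 be positive integers with b1 + b2 ≥ d/2 and, for r = 1,…,s, let M_1^r be a1 × t1 matrices and M_2^r be a2 × t2 matrices such that rank(M_i^r − M_i^{r'}) ≥ b_i and M_i^r ≠ M_i^{r'} for all r ≠ r' and i = 1,2. Then the set E of row spaces of the k × n block matrices ( M_1^r, G_1, 0, 0 ; 0, 0, M_2^r, G_2 ) (row blocks a1, a2; column blocks t1, n1−t1, t2, n2−t2), for 1 ≤ r ≤ s, G_1 ∈ D_1, G_2 ∈ D_2, consists of s·|D_1|·|D_2| distinct k-dimensional subspaces of F^n with pairwise subspace distance ≥ d. (Case 2) If instead M_1 is a set of a1 × t1 matrices with pairwise rank distance ≥ d/2 and M_2 a set of a2 × t2 matrices with pairwise rank distance ≥ d/2, then the set E of row spaces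 of ( M_1, G_1, 0, 0 ; 0, 0, M_2, G_2 ) for M_i ∈ M_i and G_i ∈ D_i consists of |M_1|·|M_2|·|D_1|·|D_2| distinct k-dimensional subspaces of F^n with pairwise subspace distance ≥ d. -/
open Matrix

/-- The generator matrix `( M1, G1, 0, 0 ; 0, 0, M2, G2 )` with row blocks of sizes
`a1, a2` and column blocks of sizes `t1, p1, t2, p2`. -/
def gen9 {F : Type*} [Field F] {a1 a2 t1 t2 p1 p2 : ℕ}
    (M1 : Matrix (Fin a1) (Fin t1) F) (G1 : Matrix (Fin a1) (Fin p1) F)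
    (M2 : Matrix (Fin a2) (Fin t2) F) (G2 : Matrix (Fin a2) (Fin p2) F) :
    Matrix (Fin a1 ⊕ Fin a2) ((Fin t1 ⊕ Fin p1) ⊕ (Fin t2 ⊕ Fin p2)) F :=
  Matrix.fromBlocks (Matrix.fromCols M1 G1) 0 0 (Matrix.fromCols M2 G2)

section helpers
variable {F : Type*} [Field F]

lemma finrank_rowSpace {m n : Type*} [Fintype m] [Fintype n] (A : Matrix m n F) :
    Module.finrank F (rowSpace A) = A.rank := by
  rw [rowSpace, ← Matrix.mulVecLin_transpose]
  rw [show Module.finrank F ↥(LinearMap.range Aᵀ.mulVecLin) = Aᵀ.rank from rfl,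
    Matrix.rank_transpose]

lemma vecMulLinear_injective_of_rank {m n : Type*} [Fintype m] [Fintype n]
    (A : Matrix m n F) (h : A.rank = Fintype.card m) :
    Function.Injective A.vecMulLinear := by
  rw [← LinearMap.ker_eq_bot, ← Submodule.finrank_eq_zero]
  have h1 := LinearMap.finrank_range_add_finrank_ker A.vecMulLinear
  have h2 : Module.finrank F ↥(LinearMap.range A.vecMulLinear) = A.rank := finrank_rowSpace A
  rw [h2, Module.finrank_fintype_fun_eq_card, h] at h1
  omega

lemma finrank_rowSpace_le {m n : Type*} [Fintype m] [Fintype n] (A : Matrix m n F) :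
    Module.finrank F (rowSpace A) ≤ Fintype.card m := by
  rw [finrank_rowSpace]
  exact A.rank_le_card_height

lemma vecMul_gen9 {a1 a2 t1 t2 p1 p2 : ℕ}
    (M1 : Matrix (Fin a1) (Fin t1) F) (G1 : Matrix (Fin a1) (Fin p1) F)
    (M2 : Matrix (Fin a2) (Fin t2) F) (G2 : Matrix (Fin a2) (Fin p2) F)
    (z : Fin a1 ⊕ Fin a2 → F) :
    z ᵥ* gen9 M1 G1 M2 G2 =
      Sum.elim ((z ∘ Sum.inl) ᵥ* fromCols M1 G1) ((z ∘ Sum.inr) ᵥ* fromCols M2 G2) := by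
  rw [gen9, vecMul_fromBlocks]
  simp

/-- Lemma B: projection to the G-block is injective on the row space. -/
lemma interB {a t p : ℕ} (M M' : Matrix (Fin a) (Fin t) F) (G G' : Matrix (Fin a) (Fin p) F)
    (hG : Function.Injective G.vecMulLinear) :
    Module.finrank F ↥(rowSpace (fromCols M G) ⊓ rowSpace (fromCols M' G')) ≤
      Module.finrank F ↥(rowSpace G ⊓ rowSpace G') := by
  set W := rowSpace (fromCols M G) ⊓ rowSpace (fromCols M' G') with hWdef
  set π : ((Fin t ⊕ Fin p) → F) →ₗ[F] (Fin p → F) := LinearMap.funLeft F F Sum.inr with hπ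
  have hsub : ∀ x ∈ W, π x ∈ rowSpace G ⊓ rowSpace G' := by
    rintro x hx
    obtain ⟨z, hz⟩ := hx.1
    obtain ⟨z', hz'⟩ := hx.2
    constructor
    · refine ⟨z, ?_⟩
      simp only [Matrix.vecMulLinear_apply] at hz ⊢
      rw [← hz, hπ]
      simp only [vecMul_fromCols, LinearMap.funLeft_apply]
      exact funext fun j => rfl
    · refine ⟨z', ?_⟩
      simp only [Matrix.vecMulLinear_apply] at hz' ⊢
      rw [← hz', hπ]
      simp only [vecMul_fromCols, LinearMap.funLeft_apply]
      exact funext fun j => rfl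
  refine LinearMap.finrank_le_finrank_of_injective (f := π.restrict hsub) ?_
  rw [← LinearMap.ker_eq_bot, LinearMap.ker_eq_bot']
  rintro ⟨x, hx⟩ hx0
  obtain ⟨z, hz⟩ := hx.1
  have h0 : π x = 0 := congrArg Subtype.val hx0
  have hzG : G.vecMulLinear z = 0 := by
    simp only [Matrix.vecMulLinear_apply] at hz ⊢
    rw [← hz, hπ] at h0
    rw [vecMul_fromCols] at h0
    exact h0
  have hz0 : z = 0 := hG (by simpa using hzG)
  have : x = 0 := by rw [← hz, hz0]; simp
  exact Subtype.ext this

/-- Lemma A: same `G`, different `M`. -/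
lemma interA {a t p : ℕ} (M M' : Matrix (Fin a) (Fin t) F) (G : Matrix (Fin a) (Fin p) F)
    (hG : Function.Injective G.vecMulLinear) :
    Module.finrank F ↥(rowSpace (fromCols M G) ⊓ rowSpace (fromCols M' G)) ≤
      a - (M - M').rank := by
  have hle : rowSpace (fromCols M G) ⊓ rowSpace (fromCols M' G) ≤
      (LinearMap.ker (M - M').vecMulLinear).map (fromCols M G).vecMulLinear := by
    rintro x hx
    obtain ⟨z, hz⟩ := hx.1
    obtain ⟨z', hz'⟩ := hx.2
    simp only [Matrix.vecMulLinear_apply, vecMul_fromCols] at hz hz'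
    have heq := hz.trans hz'.symm
    have hGzz : z ᵥ* G = z' ᵥ* G := by
      funext j; exact congrFun heq (Sum.inr j)
    have hzz' : z = z' := hG (by simpa using hGzz)
    have hM : z ᵥ* M = z ᵥ* M' := by
      funext j
      have := congrFun heq (Sum.inl j)
      simpa [hzz'] using this
    refine ⟨z, ?_, ?_⟩
    · simp [LinearMap.mem_ker, Matrix.vecMul_sub, hM]
    · show (M.fromCols G).vecMulLinear z = x
      simp only [Matrix.vecMulLinear_apply, vecMul_fromCols]
      exact hz
  calc Module.finrank F ↥(rowSpace (fromCols M G) ⊓ rowSpace (fromCols M' G))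
      ≤ Module.finrank F ↥((LinearMap.ker (M - M').vecMulLinear).map
          (fromCols M G).vecMulLinear) := Submodule.finrank_mono hle
    _ ≤ Module.finrank F ↥(LinearMap.ker (M - M').vecMulLinear) :=
        Submodule.finrank_map_le _ _
    _ ≤ a - (M - M').rank := by
        have h1 := LinearMap.finrank_range_add_finrank_ker (M - M').vecMulLinear
        have h2 : Module.finrank F ↥(LinearMap.range (M - M').vecMulLinear)
            = (M - M').rank := by
          rw [← Matrix.mulVecLin_transpose]
          rw [show Module.finrank F ↥(LinearMap.range (M - M')ᵀ.mulVecLin)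
              = (M - M')ᵀ.rank from rfl, Matrix.rank_transpose]
        rw [h2, Module.finrank_fintype_fun_eq_card, Fintype.card_fin] at h1
        omega

/-- trivial bound -/
lemma interC {a t p : ℕ} (M M' : Matrix (Fin a) (Fin t) F) (G G' : Matrix (Fin a) (Fin p) F) :
    Module.finrank F ↥(rowSpace (fromCols M G) ⊓ rowSpace (fromCols M' G')) ≤ a :=
  (Submodule.finrank_mono inf_le_left).trans
    ((finrank_rowSpace_le _).trans_eq (Fintype.card_fin a))

lemma finrank_rowSpace_gen9 {a1 a2 t1 t2 p1 p2 : ℕ}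
    (M1 : Matrix (Fin a1) (Fin t1) F) (G1 : Matrix (Fin a1) (Fin p1) F)
    (M2 : Matrix (Fin a2) (Fin t2) F) (G2 : Matrix (Fin a2) (Fin p2) F)
    (hG1 : Function.Injective G1.vecMulLinear) (hG2 : Function.Injective G2.vecMulLinear) :
    Module.finrank F ↥(rowSpace (gen9 M1 G1 M2 G2)) = a1 + a2 := by
  have hinj : Function.Injective (gen9 M1 G1 M2 G2).vecMulLinear := by
    rw [← LinearMap.ker_eq_bot]
    refine LinearMap.ker_eq_bot'.mpr ?_
    intro z hz
    simp only [Matrix.vecMulLinear_apply, vecMul_gen9] at hz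
    have h1 : (z ∘ Sum.inl) ᵥ* G1 = 0 := by
      funext j
      have := congrFun hz (Sum.inl (Sum.inr j))
      simpa [vecMul_fromCols] using this
    have h2 : (z ∘ Sum.inr) ᵥ* G2 = 0 := by
      funext j
      have := congrFun hz (Sum.inr (Sum.inr j))
      simpa [vecMul_fromCols] using this
    have hz1 : z ∘ Sum.inl = 0 := hG1 (by simpa using h1)
    have hz2 : z ∘ Sum.inr = 0 := hG2 (by simpa using h2)
    funext i
    cases i with
    | inl i => exact congrFun hz1 i
    | inr i => exact congrFun hz2 i
  rw [rowSpace, LinearMap.finrank_range_of_inj hinj, Module.finrank_fintype_fun_eq_card,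
    Fintype.card_sum, Fintype.card_fin, Fintype.card_fin]

lemma gen9_inter_le {a1 a2 t1 t2 p1 p2 : ℕ}
    (M1 M1' : Matrix (Fin a1) (Fin t1) F) (G1 G1' : Matrix (Fin a1) (Fin p1) F)
    (M2 M2' : Matrix (Fin a2) (Fin t2) F) (G2 G2' : Matrix (Fin a2) (Fin p2) F)
    {c1 c2 : ℕ}
    (h1 : Module.finrank F ↥(rowSpace (fromCols M1 G1) ⊓ rowSpace (fromCols M1' G1')) ≤ c1)
    (h2 : Module.finrank F ↥(rowSpace (fromCols M2 G2) ⊓ rowSpace (fromCols M2' G2')) ≤ c2) :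
    Module.finrank F ↥(rowSpace (gen9 M1 G1 M2 G2) ⊓ rowSpace (gen9 M1' G1' M2' G2')) ≤
      c1 + c2 := by
  set W := rowSpace (gen9 M1 G1 M2 G2) ⊓ rowSpace (gen9 M1' G1' M2' G2') with hW
  set I1 := rowSpace (fromCols M1 G1) ⊓ rowSpace (fromCols M1' G1') with hI1
  set I2 := rowSpace (fromCols M2 G2) ⊓ rowSpace (fromCols M2' G2') with hI2
  set π1 : (((Fin t1 ⊕ Fin p1) ⊕ (Fin t2 ⊕ Fin p2)) → F) →ₗ[F] ((Fin t1 ⊕ Fin p1) → F) :=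
    LinearMap.funLeft F F Sum.inl with hπ1
  set π2 : (((Fin t1 ⊕ Fin p1) ⊕ (Fin t2 ⊕ Fin p2)) → F) →ₗ[F] ((Fin t2 ⊕ Fin p2) → F) :=
    LinearMap.funLeft F F Sum.inr with hπ2
  have hm1 : ∀ x ∈ W, π1 x ∈ I1 := by
    rintro x hx
    obtain ⟨z, hz⟩ := hx.1
    obtain ⟨z', hz'⟩ := hx.2
    simp only [Matrix.vecMulLinear_apply, vecMul_gen9] at hz hz'
    constructor
    · exact ⟨z ∘ Sum.inl, by rw [Matrix.vecMulLinear_apply, ← hz]; exact funext fun j => rfl⟩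
    · exact ⟨z' ∘ Sum.inl, by rw [Matrix.vecMulLinear_apply, ← hz']; exact funext fun j => rfl⟩
  have hm2 : ∀ x ∈ W, π2 x ∈ I2 := by
    rintro x hx
    obtain ⟨z, hz⟩ := hx.1
    obtain ⟨z', hz'⟩ := hx.2
    simp only [Matrix.vecMulLinear_apply, vecMul_gen9] at hz hz'
    constructor
    · exact ⟨z ∘ Sum.inr, by rw [Matrix.vecMulLinear_apply, ← hz]; exact funext fun j => rfl⟩
    · exact ⟨z' ∘ Sum.inr, by rw [Matrix.vecMulLinear_apply, ← hz']; exact funext fun j => rfl⟩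
  have hinj : Function.Injective
      (LinearMap.prod (π1.restrict hm1) (π2.restrict hm2)) := by
    rw [← LinearMap.ker_eq_bot]
    refine LinearMap.ker_eq_bot'.mpr ?_
    rintro ⟨x, hx⟩ hx0
    have h1' : π1 x = 0 := congrArg (Subtype.val ∘ Prod.fst) hx0
    have h2' : π2 x = 0 := congrArg (Subtype.val ∘ Prod.snd) hx0
    refine Subtype.ext ?_
    funext i
    cases i with
    | inl i => exact congrFun h1' i
    | inr i => exact congrFun h2' i
  calc Module.finrank F ↥W ≤ Module.finrank F (↥I1 × ↥I2) :=
        LinearMap.finrank_le_finrank_of_injective hinj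
    _ = Module.finrank F ↥I1 + Module.finrank F ↥I2 := Module.finrank_prod
    _ ≤ c1 + c2 := Nat.add_le_add h1 h2

lemma ncard_prod' {α β : Type*} (s : Set α) (t : Set β) :
    (s ×ˢ t).ncard = s.ncard * t.ncard := by
  rw [← Nat.card_coe_set_eq, ← Nat.card_coe_set_eq, ← Nat.card_coe_set_eq,
    Nat.card_congr (Equiv.Set.prod s t), Nat.card_prod]

end helpers

/-- the parallel multiple blocks construction (Theorem 2.7), both cases:
row spaces of `( M1, G1, 0, 0 ; 0, 0, M2, G2 )` form constant dimension codes of the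
stated cardinalities with subspace distance at least `d`. -/
theorem parallel_multiple_blocks_construction
    (F : Type*) [Field F] [Fintype F] (d n1 n2 a1 a2 t1 t2 k s b1 b2 : ℕ)
    (hd : 0 < d) (hd2 : 2 ∣ d) (hs : 0 < s) (hk : a1 + a2 = k)
    (ha1 : d / 2 ≤ a1) (ha2 : d / 2 ≤ a2)
    (ht1 : a1 ≤ t1) (ht1' : t1 ≤ n1 - a1) (ht2 : a2 ≤ t2) (ht2' : t2 ≤ n2 - a2)
    (hb : d / 2 ≤ b1 + b2) (hb1 : 0 < b1) (hb2 : 0 < b2)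
    (D1 : Set (Matrix (Fin a1) (Fin (n1 - t1)) F))
    (D2 : Set (Matrix (Fin a2) (Fin (n2 - t2)) F))
    (hD1rank : ∀ G ∈ D1, G.rank = a1)
    (hD1 : ∀ G ∈ D1, ∀ G' ∈ D1, G ≠ G' →
      rowSpace G ≠ rowSpace G' ∧
        Module.finrank F ↥(rowSpace G ⊓ rowSpace G') ≤ a1 - d / 2)
    (hD2rank : ∀ G ∈ D2, G.rank = a2)
    (hD2 : ∀ G ∈ D2, ∀ G' ∈ D2, G ≠ G' →
      rowSpace G ≠ rowSpace G' ∧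
        Module.finrank F ↥(rowSpace G ⊓ rowSpace G') ≤ a2 - d / 2)
    -- Case 1 data: families of single matrices indexed by `Fin s`
    (M1f : Fin s → Matrix (Fin a1) (Fin t1) F)
    (M2f : Fin s → Matrix (Fin a2) (Fin t2) F)
    (hM1f : ∀ r r', r ≠ r' → M1f r ≠ M1f r' ∧ b1 ≤ (M1f r - M1f r').rank)
    (hM2f : ∀ r r', r ≠ r' → M2f r ≠ M2f r' ∧ b2 ≤ (M2f r - M2f r').rank)
    -- Case 2 data: sets of matrices with pairwise rank distance ≥ d/2
    (𝓜1 : Set (Matrix (Fin a1) (Fin t1) F)) (𝓜2 : Set (Matrix (Fin a2) (Fin t2) F))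
    (h𝓜1 : ∀ M ∈ 𝓜1, ∀ M' ∈ 𝓜1, M ≠ M' → d / 2 ≤ (M - M').rank)
    (h𝓜2 : ∀ M ∈ 𝓜2, ∀ M' ∈ 𝓜2, M ≠ M' → d / 2 ≤ (M - M').rank) :
    -- Case 1 conclusion
    (let E : Set (Submodule F ((Fin t1 ⊕ Fin (n1 - t1)) ⊕ (Fin t2 ⊕ Fin (n2 - t2)) → F)) :=
      {U | ∃ r : Fin s, ∃ G1 ∈ D1, ∃ G2 ∈ D2, U = rowSpace (gen9 (M1f r) G1 (M2f r) G2)}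
     E.ncard = s * D1.ncard * D2.ncard ∧
     (∀ U ∈ E, Module.finrank F ↥U = k) ∧
     (∀ U ∈ E, ∀ V ∈ E, U ≠ V → d ≤ 2 * k - 2 * Module.finrank F ↥(U ⊓ V))) ∧
    -- Case 2 conclusion
    (let E : Set (Submodule F ((Fin t1 ⊕ Fin (n1 - t1)) ⊕ (Fin t2 ⊕ Fin (n2 - t2)) → F)) :=
      {U | ∃ M1 ∈ 𝓜1, ∃ M2 ∈ 𝓜2, ∃ G1 ∈ D1, ∃ G2 ∈ D2, U = rowSpace (gen9 M1 G1 M2 G2)}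
     E.ncard = 𝓜1.ncard * 𝓜2.ncard * D1.ncard * D2.ncard ∧
     (∀ U ∈ E, Module.finrank F ↥U = k) ∧
     (∀ U ∈ E, ∀ V ∈ E, U ≠ V → d ≤ 2 * k - 2 * Module.finrank F ↥(U ⊓ V))) := by
  classical
  have hq : 2 * (d / 2) = d := Nat.mul_div_cancel' hd2
  have hI1 : ∀ G ∈ D1, Function.Injective G.vecMulLinear := fun G hG =>
    vecMulLinear_injective_of_rank G (by rw [hD1rank G hG, Fintype.card_fin])
  have hI2 : ∀ G ∈ D2, Function.Injective G.vecMulLinear := fun G hG =>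
    vecMulLinear_injective_of_rank G (by rw [hD2rank G hG, Fintype.card_fin])
  have hdim : ∀ (M1 : Matrix (Fin a1) (Fin t1) F) (M2 : Matrix (Fin a2) (Fin t2) F),
      ∀ G1 ∈ D1, ∀ G2 ∈ D2,
      Module.finrank F ↥(rowSpace (gen9 M1 G1 M2 G2)) = k := by
    intro M1 M2 G1 hG1 G2 hG2
    rw [finrank_rowSpace_gen9 M1 G1 M2 G2 (hI1 G1 hG1) (hI2 G2 hG2), hk]
  -- Case 1 key bound
  have key1 : ∀ (r r' : Fin s) G1 G1' G2 G2', G1 ∈ D1 → G1' ∈ D1 → G2 ∈ D2 → G2' ∈ D2 →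
      ¬(r = r' ∧ G1 = G1' ∧ G2 = G2') →
      Module.finrank F ↥(rowSpace (gen9 (M1f r) G1 (M2f r) G2) ⊓
        rowSpace (gen9 (M1f r') G1' (M2f r') G2')) ≤ k - d / 2 := by
    intro r r' G1 G1' G2 G2' h1 h1' h2 h2' hne
    by_cases hG1e : G1 = G1'
    · by_cases hG2e : G2 = G2'
      · subst hG1e; subst hG2e
        have hrr : r ≠ r' := by tauto
        have hrank1 := (hM1f r r' hrr).2
        have hrank2 := (hM2f r r' hrr).2
        have hr1le : (M1f r - M1f r').rank ≤ a1 :=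
          ((M1f r - M1f r').rank_le_card_height).trans_eq (Fintype.card_fin a1)
        have hr2le : (M2f r - M2f r').rank ≤ a2 :=
          ((M2f r - M2f r').rank_le_card_height).trans_eq (Fintype.card_fin a2)
        refine (gen9_inter_le _ _ _ _ _ _ _ _
          (interA (M1f r) (M1f r') G1 (hI1 G1 h1))
          (interA (M2f r) (M2f r') G2 (hI2 G2 h2))).trans ?_
        omega
      · have hbd2 := (interB (M2f r) (M2f r') G2 G2' (hI2 G2 h2)).trans
          (hD2 G2 h2 G2' h2' hG2e).2
        refine (gen9_inter_le _ _ _ _ _ _ _ _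
          (interC (M1f r) (M1f r') G1 G1') hbd2).trans ?_
        omega
    · have hbd1 := (interB (M1f r) (M1f r') G1 G1' (hI1 G1 h1)).trans
        (hD1 G1 h1 G1' h1' hG1e).2
      refine (gen9_inter_le _ _ _ _ _ _ _ _
        hbd1 (interC (M2f r) (M2f r') G2 G2')).trans ?_
      omega
  -- Case 2 key bound
  have key2 : ∀ M1 M1' M2 M2' G1 G1' G2 G2', M1 ∈ 𝓜1 → M1' ∈ 𝓜1 → M2 ∈ 𝓜2 → M2' ∈ 𝓜2 →
      G1 ∈ D1 → G1' ∈ D1 → G2 ∈ D2 → G2' ∈ D2 →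
      ¬(M1 = M1' ∧ M2 = M2' ∧ G1 = G1' ∧ G2 = G2') →
      Module.finrank F ↥(rowSpace (gen9 M1 G1 M2 G2) ⊓
        rowSpace (gen9 M1' G1' M2' G2')) ≤ k - d / 2 := by
    intro M1 M1' M2 M2' G1 G1' G2 G2' hm1 hm1' hm2 hm2' h1 h1' h2 h2' hne
    by_cases hG1e : G1 = G1'
    · by_cases hG2e : G2 = G2'
      · subst hG1e; subst hG2e
        have hMM : M1 ≠ M1' ∨ M2 ≠ M2' := by tauto
        rcases hMM with hMM | hMM
        · have hrk := h𝓜1 M1 hm1 M1' hm1' hMM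
          have hr1le : (M1 - M1').rank ≤ a1 :=
            ((M1 - M1').rank_le_card_height).trans_eq (Fintype.card_fin a1)
          refine (gen9_inter_le _ _ _ _ _ _ _ _
            (interA M1 M1' G1 (hI1 G1 h1)) (interC M2 M2' G2 G2)).trans ?_
          omega
        · have hrk := h𝓜2 M2 hm2 M2' hm2' hMM
          have hr2le : (M2 - M2').rank ≤ a2 :=
            ((M2 - M2').rank_le_card_height).trans_eq (Fintype.card_fin a2)
          refine (gen9_inter_le _ _ _ _ _ _ _ _
            (interC M1 M1' G1 G1) (interA M2 M2' G2 (hI2 G2 h2))).trans ?_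
          omega
      · have hbd2 := (interB M2 M2' G2 G2' (hI2 G2 h2)).trans (hD2 G2 h2 G2' h2' hG2e).2
        refine (gen9_inter_le _ _ _ _ _ _ _ _ (interC M1 M1' G1 G1') hbd2).trans ?_
        omega
    · have hbd1 := (interB M1 M1' G1 G1' (hI1 G1 h1)).trans (hD1 G1 h1 G1' h1' hG1e).2
      refine (gen9_inter_le _ _ _ _ _ _ _ _ hbd1 (interC M2 M2' G2 G2')).trans ?_
      omega
  -- Case 1 conclusions
  have hdim1 : ∀ U ∈ {U | ∃ r : Fin s, ∃ G1 ∈ D1, ∃ G2 ∈ D2,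
      U = rowSpace (gen9 (M1f r) G1 (M2f r) G2)}, Module.finrank F ↥U = k := by
    rintro U ⟨r, G1, h1, G2, h2, rfl⟩
    exact hdim _ _ G1 h1 G2 h2
  have hdist1 : ∀ U ∈ {U | ∃ r : Fin s, ∃ G1 ∈ D1, ∃ G2 ∈ D2,
        U = rowSpace (gen9 (M1f r) G1 (M2f r) G2)},
      ∀ V ∈ {U | ∃ r : Fin s, ∃ G1 ∈ D1, ∃ G2 ∈ D2,
        U = rowSpace (gen9 (M1f r) G1 (M2f r) G2)},
      U ≠ V → d ≤ 2 * k - 2 * Module.finrank F ↥(U ⊓ V) := by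
    rintro U ⟨r, G1, h1, G2, h2, rfl⟩ V ⟨r', G1', h1', G2', h2', rfl⟩ hUV
    have hne : ¬(r = r' ∧ G1 = G1' ∧ G2 = G2') := by
      rintro ⟨rfl, rfl, rfl⟩; exact hUV rfl
    have hb := key1 r r' G1 G1' G2 G2' h1 h1' h2 h2' hne
    omega
  have hcard1 : ({U | ∃ r : Fin s, ∃ G1 ∈ D1, ∃ G2 ∈ D2,
      U = rowSpace (gen9 (M1f r) G1 (M2f r) G2)} : Set (Submodule F
        ((Fin t1 ⊕ Fin (n1 - t1)) ⊕ (Fin t2 ⊕ Fin (n2 - t2)) → F))).ncard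
      = s * D1.ncard * D2.ncard := by
    have hEim : ({U | ∃ r : Fin s, ∃ G1 ∈ D1, ∃ G2 ∈ D2,
        U = rowSpace (gen9 (M1f r) G1 (M2f r) G2)} : Set (Submodule F
          ((Fin t1 ⊕ Fin (n1 - t1)) ⊕ (Fin t2 ⊕ Fin (n2 - t2)) → F)))
        = (fun x : Fin s × Matrix (Fin a1) (Fin (n1 - t1)) F ×
              Matrix (Fin a2) (Fin (n2 - t2)) F =>
            rowSpace (gen9 (M1f x.1) x.2.1 (M2f x.1) x.2.2)) ''
          (Set.univ ×ˢ D1 ×ˢ D2) := by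
      ext U
      constructor
      · rintro ⟨r, G1, h1, G2, h2, rfl⟩
        exact ⟨(r, G1, G2), ⟨Set.mem_univ _, h1, h2⟩, rfl⟩
      · rintro ⟨⟨r, G1, G2⟩, ⟨-, h1, h2⟩, rfl⟩
        exact ⟨r, G1, h1, G2, h2, rfl⟩
    have hinj : Set.InjOn (fun x : Fin s × Matrix (Fin a1) (Fin (n1 - t1)) F ×
          Matrix (Fin a2) (Fin (n2 - t2)) F =>
        rowSpace (gen9 (M1f x.1) x.2.1 (M2f x.1) x.2.2)) (Set.univ ×ˢ D1 ×ˢ D2) := by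
      rintro ⟨r, G1, G2⟩ ⟨-, h1, h2⟩ ⟨r', G1', G2'⟩ ⟨-, h1', h2'⟩ heq
      by_contra hne
      have hne' : ¬(r = r' ∧ G1 = G1' ∧ G2 = G2') := by
        rintro ⟨ha, hb', hc⟩; exact hne (by simp [Prod.ext_iff, ha, hb', hc])
      have hb := key1 r r' G1 G1' G2 G2' h1 h1' h2 h2' hne'
      have heq' : rowSpace (gen9 (M1f r) G1 (M2f r) G2)
          = rowSpace (gen9 (M1f r') G1' (M2f r') G2') := heq
      rw [heq', inf_idem] at hb
      have hdU := hdim (M1f r') (M2f r') G1' h1' G2' h2'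
      omega
    rw [hEim, Set.ncard_image_of_injOn hinj, ncard_prod', ncard_prod', Set.ncard_univ,
      Nat.card_eq_fintype_card, Fintype.card_fin]
    ring
  -- Case 2 conclusions
  have hdim2 : ∀ U ∈ {U | ∃ M1 ∈ 𝓜1, ∃ M2 ∈ 𝓜2, ∃ G1 ∈ D1, ∃ G2 ∈ D2,
      U = rowSpace (gen9 M1 G1 M2 G2)}, Module.finrank F ↥U = k := by
    rintro U ⟨M1, hm1, M2, hm2, G1, h1, G2, h2, rfl⟩
    exact hdim _ _ G1 h1 G2 h2
  have hdist2 : ∀ U ∈ {U | ∃ M1 ∈ 𝓜1, ∃ M2 ∈ 𝓜2, ∃ G1 ∈ D1, ∃ G2 ∈ D2,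
        U = rowSpace (gen9 M1 G1 M2 G2)},
      ∀ V ∈ {U | ∃ M1 ∈ 𝓜1, ∃ M2 ∈ 𝓜2, ∃ G1 ∈ D1, ∃ G2 ∈ D2,
        U = rowSpace (gen9 M1 G1 M2 G2)},
      U ≠ V → d ≤ 2 * k - 2 * Module.finrank F ↥(U ⊓ V) := by
    rintro U ⟨M1, hm1, M2, hm2, G1, h1, G2, h2, rfl⟩
      V ⟨M1', hm1', M2', hm2', G1', h1', G2', h2', rfl⟩ hUV
    have hne : ¬(M1 = M1' ∧ M2 = M2' ∧ G1 = G1' ∧ G2 = G2') := by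
      rintro ⟨rfl, rfl, rfl, rfl⟩; exact hUV rfl
    have hb := key2 M1 M1' M2 M2' G1 G1' G2 G2' hm1 hm1' hm2 hm2' h1 h1' h2 h2' hne
    omega
  have hcard2 : ({U | ∃ M1 ∈ 𝓜1, ∃ M2 ∈ 𝓜2, ∃ G1 ∈ D1, ∃ G2 ∈ D2,
      U = rowSpace (gen9 M1 G1 M2 G2)} : Set (Submodule F
        ((Fin t1 ⊕ Fin (n1 - t1)) ⊕ (Fin t2 ⊕ Fin (n2 - t2)) → F))).ncard
      = 𝓜1.ncard * 𝓜2.ncard * D1.ncard * D2.ncard := by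
    have hEim : ({U | ∃ M1 ∈ 𝓜1, ∃ M2 ∈ 𝓜2, ∃ G1 ∈ D1, ∃ G2 ∈ D2,
        U = rowSpace (gen9 M1 G1 M2 G2)} : Set (Submodule F
          ((Fin t1 ⊕ Fin (n1 - t1)) ⊕ (Fin t2 ⊕ Fin (n2 - t2)) → F)))
        = (fun x : Matrix (Fin a1) (Fin t1) F × Matrix (Fin a2) (Fin t2) F ×
              Matrix (Fin a1) (Fin (n1 - t1)) F × Matrix (Fin a2) (Fin (n2 - t2)) F =>
            rowSpace (gen9 x.1 x.2.2.1 x.2.1 x.2.2.2)) ''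
          (𝓜1 ×ˢ 𝓜2 ×ˢ D1 ×ˢ D2) := by
      ext U
      constructor
      · rintro ⟨M1, hm1, M2, hm2, G1, h1, G2, h2, rfl⟩
        exact ⟨(M1, M2, G1, G2), ⟨hm1, hm2, h1, h2⟩, rfl⟩
      · rintro ⟨⟨M1, M2, G1, G2⟩, ⟨hm1, hm2, h1, h2⟩, rfl⟩
        exact ⟨M1, hm1, M2, hm2, G1, h1, G2, h2, rfl⟩
    have hinj : Set.InjOn (fun x : Matrix (Fin a1) (Fin t1) F × Matrix (Fin a2) (Fin t2) F ×
          Matrix (Fin a1) (Fin (n1 - t1)) F × Matrix (Fin a2) (Fin (n2 - t2)) F =>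
        rowSpace (gen9 x.1 x.2.2.1 x.2.1 x.2.2.2)) (𝓜1 ×ˢ 𝓜2 ×ˢ D1 ×ˢ D2) := by
      rintro ⟨M1, M2, G1, G2⟩ ⟨hm1, hm2, h1, h2⟩ ⟨M1', M2', G1', G2'⟩
        ⟨hm1', hm2', h1', h2'⟩ heq
      by_contra hne
      have hne' : ¬(M1 = M1' ∧ M2 = M2' ∧ G1 = G1' ∧ G2 = G2') := by
        rintro ⟨ha, hb', hc, hd'⟩; exact hne (by simp [Prod.ext_iff, ha, hb', hc, hd'])
      have hb := key2 M1 M1' M2 M2' G1 G1' G2 G2' hm1 hm1' hm2 hm2' h1 h1' h2 h2' hne'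
      have heq' : rowSpace (gen9 M1 G1 M2 G2) = rowSpace (gen9 M1' G1' M2' G2') := heq
      rw [heq', inf_idem] at hb
      have hdU := hdim M1' M2' G1' h1' G2' h2'
      omega
    rw [hEim, Set.ncard_image_of_injOn hinj, ncard_prod', ncard_prod', ncard_prod']
    ring
  exact ⟨⟨hcard1, hdim1, hdist1⟩, hcard2, hdim2, hdist2⟩
end

section
/- Let F be a finite field, let d be an even positive integer, and let n = δ1 + δ2, k = u1 + u2, with nonnegative integers Δ, p = δ1 − Δ − u1 ≥ 0, m = δ2 − u2 ≥ 0, u1 ≥ d/2 and u2 ≥ d/2. For u1 × p matrices M_1, u1 × m matrices M_3 and u2 × m matrices M_2 over F, let L(M_1, M_3, M_2) ⊆ F^n denote the row space of the k × n block matrix with row blocks u1, u2 and column blocks Δ, u1, p, u2, m given by ( 0, I_{u1}, M_1, 0, M_3 ; 0, 0, 0, I_{u2}, M_2 ). (i) If M is a set of such triples whose associated k × (p+m) matrices ( M_1, M_3 ; 0, M_2 ) have pairwise rank distance ≥ d/2, then the subspaces L(M_1, M_3, M_2) are distinct k-dimensional subspaces of F^n with pairwise subspace distance ≥ d. (ii)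 Let S1 ⊆ F^n be the subspace of vectors whose first δ1 coordinates are zero and S2 the subspace of vectors whose last δ2 coordinates are zero; then for W = L(M_1, M_3, M_2) one has dim(W ∩ S1) = u2 ≥ d/2 and dim(W ∩ S2) = u1 − rank(M_3); in particular, if rank(M_3) ≤ u1 − d/2 then dim(W ∩ S2) ≥ d/2. -/
open Matrix

/-- The lifted generator matrix `( 0, I_{u1}, M1, 0, M3 ; 0, 0, 0, I_{u2}, M2 )` with
row blocks `u1, u2` and column blocks `Δ, u1, p, u2, m`. -/
def L13 {F : Type*} [Field F] {Δ u1 p u2 m : ℕ}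
    (M1 : Matrix (Fin u1) (Fin p) F) (M3 : Matrix (Fin u1) (Fin m) F)
    (M2 : Matrix (Fin u2) (Fin m) F) :
    Matrix (Fin u1 ⊕ Fin u2) ((Fin Δ ⊕ (Fin u1 ⊕ Fin p)) ⊕ (Fin u2 ⊕ Fin m)) F :=
  Matrix.fromBlocks
    (Matrix.fromCols 0 (Matrix.fromCols 1 M1)) (Matrix.fromCols 0 M3)
    0 (Matrix.fromCols 1 M2)

/-- `S1`: the subspace of vectors whose first `δ1 = Δ + u1 + p` coordinates are zero. -/
noncomputable def S1' (F : Type*) [Field F] (Δ u1 p u2 m : ℕ) :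
    Submodule F ((Fin Δ ⊕ (Fin u1 ⊕ Fin p)) ⊕ (Fin u2 ⊕ Fin m) → F) :=
  LinearMap.ker (LinearMap.funLeft F F
    (Sum.inl : Fin Δ ⊕ (Fin u1 ⊕ Fin p) → (Fin Δ ⊕ (Fin u1 ⊕ Fin p)) ⊕ (Fin u2 ⊕ Fin m)))

/-- `S2`: the subspace of vectors whose last `δ2 = u2 + m` coordinates are zero. -/
noncomputable def S2' (F : Type*) [Field F] (Δ u1 p u2 m : ℕ) :
    Submodule F ((Fin Δ ⊕ (Fin u1 ⊕ Fin p)) ⊕ (Fin u2 ⊕ Fin m) → F) :=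
  LinearMap.ker (LinearMap.funLeft F F
    (Sum.inr : Fin u2 ⊕ Fin m → (Fin Δ ⊕ (Fin u1 ⊕ Fin p)) ⊕ (Fin u2 ⊕ Fin m)))

section Helpers

variable {F : Type*} [Field F] {Δ u1 p u2 m : ℕ}

lemma vecMul_L13 (M1 : Matrix (Fin u1) (Fin p) F) (M3 : Matrix (Fin u1) (Fin m) F)
    (M2 : Matrix (Fin u2) (Fin m) F) (x : Fin u1 ⊕ Fin u2 → F) :
    x ᵥ* L13 (Δ := Δ) M1 M3 M2 =
      Sum.elim (Sum.elim (0 : Fin Δ → F) (Sum.elim (x ∘ Sum.inl) ((x ∘ Sum.inl) ᵥ* M1)))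
        (Sum.elim (x ∘ Sum.inr) ((x ∘ Sum.inl) ᵥ* M3 + (x ∘ Sum.inr) ᵥ* M2)) := by
  funext j
  rcases j with (j | j | j) | (j | j) <;>
    simp [L13, Matrix.vecMul_fromBlocks, Matrix.vecMul_fromCols]

lemma L13_vecMulLinear_injective (M1 : Matrix (Fin u1) (Fin p) F)
    (M3 : Matrix (Fin u1) (Fin m) F) (M2 : Matrix (Fin u2) (Fin m) F) :
    Function.Injective (L13 (Δ := Δ) M1 M3 M2).vecMulLinear := by
  rw [← LinearMap.ker_eq_bot, LinearMap.ker_eq_bot']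
  intro x hx
  rw [Matrix.vecMulLinear_apply, vecMul_L13] at hx
  funext i
  rcases i with j | j
  · have := congrFun hx (Sum.inl (Sum.inr (Sum.inl j)))
    simpa using this
  · have := congrFun hx (Sum.inr (Sum.inl j))
    simpa using this

lemma finrank_ker_vecMulLinear {a b : Type*} [Fintype a] [Fintype b]
    (A : Matrix a b F) :
    Module.finrank F (LinearMap.ker A.vecMulLinear) + A.rank = Fintype.card a := by
  have h1 : A.vecMulLinear = (Aᵀ).mulVecLin := by
    ext x j
    simp [Matrix.mulVec_transpose]
  rw [h1, ← Matrix.rank_transpose A, Matrix.rank]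
  have := LinearMap.finrank_range_add_finrank_ker (Aᵀ).mulVecLin
  rw [Module.finrank_pi] at this
  omega

lemma finrank_map_of_injective {V W : Type*} [AddCommGroup V] [Module F V]
    [AddCommGroup W] [Module F W] (f : V →ₗ[F] W) (hf : Function.Injective f)
    (K : Submodule F V) :
    Module.finrank F (Submodule.map f K) = Module.finrank F K :=
  (Submodule.equivMapOfInjective f hf K).finrank_eq.symm

/-- The intersection of a row space with the kernel of a linear functional-like map. -/
lemma rowSpace_inf_ker {n q : Type*} [Fintype n]
    (A : Matrix (Fin u1 ⊕ Fin u2) n F) (g : (n → F) →ₗ[F] (q → F)) :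
    rowSpace A ⊓ LinearMap.ker g =
      Submodule.map A.vecMulLinear (LinearMap.ker (g ∘ₗ A.vecMulLinear)) := by
  rw [LinearMap.ker_comp, Submodule.map_comap_eq, rowSpace, inf_comm]

lemma ker_comp_inl (M1 : Matrix (Fin u1) (Fin p) F) (M3 : Matrix (Fin u1) (Fin m) F)
    (M2 : Matrix (Fin u2) (Fin m) F) :
    LinearMap.ker ((LinearMap.funLeft F F
        (Sum.inl : Fin Δ ⊕ (Fin u1 ⊕ Fin p) → (Fin Δ ⊕ (Fin u1 ⊕ Fin p)) ⊕ (Fin u2 ⊕ Fin m)))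
        ∘ₗ (L13 (Δ := Δ) M1 M3 M2).vecMulLinear) =
      LinearMap.ker (LinearMap.funLeft F F (Sum.inl : Fin u1 → Fin u1 ⊕ Fin u2)) := by
  ext x
  simp only [LinearMap.mem_ker, LinearMap.comp_apply, Matrix.vecMulLinear_apply,
    vecMul_L13, LinearMap.funLeft_apply]
  constructor
  · intro h
    funext j
    have := congrFun h (Sum.inr (Sum.inl j))
    simpa using this
  · intro h
    have h' : x ∘ Sum.inl = 0 := h
    funext j
    rcases j with j | j | j <;> simp [h']

/-- Extension by zero on the left summand, as a linear map. -/
def sumInlMap (F : Type*) [Field F] (u1 u2 : ℕ) :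
    (Fin u1 → F) →ₗ[F] (Fin u1 ⊕ Fin u2 → F) where
  toFun x := Sum.elim x 0
  map_add' x y := by funext j; rcases j with j | j <;> simp
  map_smul' c x := by funext j; rcases j with j | j <;> simp

@[simp] lemma sumInlMap_apply (x : Fin u1 → F) :
    sumInlMap F u1 u2 x = Sum.elim x 0 := rfl

@[simp] lemma sumInlMap_comp_inl (x : Fin u1 → F) :
    (sumInlMap F u1 u2 x) ∘ Sum.inl = x := rfl

@[simp] lemma sumInlMap_comp_inr (x : Fin u1 → F) :
    (sumInlMap F u1 u2 x) ∘ Sum.inr = 0 := rfl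

lemma sumInlMap_injective : Function.Injective (sumInlMap F u1 u2) := by
  intro x y h
  funext j
  simpa using congrFun h (Sum.inl j)

lemma ker_comp_inr (M1 : Matrix (Fin u1) (Fin p) F) (M3 : Matrix (Fin u1) (Fin m) F)
    (M2 : Matrix (Fin u2) (Fin m) F) :
    LinearMap.ker ((LinearMap.funLeft F F
        (Sum.inr : Fin u2 ⊕ Fin m → (Fin Δ ⊕ (Fin u1 ⊕ Fin p)) ⊕ (Fin u2 ⊕ Fin m)))
        ∘ₗ (L13 (Δ := Δ) M1 M3 M2).vecMulLinear) =
      Submodule.map (sumInlMap F u1 u2) (LinearMap.ker M3.vecMulLinear) := by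
  ext x
  simp only [LinearMap.mem_ker, LinearMap.comp_apply, Matrix.vecMulLinear_apply,
    vecMul_L13, LinearMap.funLeft_apply, Submodule.mem_map]
  constructor
  · intro h
    have h2 : x ∘ Sum.inr = 0 := by
      funext j
      have := congrFun h (Sum.inl j)
      simpa using this
    have h3 : (x ∘ Sum.inl) ᵥ* M3 = 0 := by
      funext j
      have := congrFun h (Sum.inr j)
      simpa [h2] using this
    refine ⟨x ∘ Sum.inl, h3, ?_⟩
    funext i
    rcases i with j | j
    · rfl
    · exact (congrFun h2 j).symm
  · rintro ⟨y, hy, rfl⟩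
    funext j
    rcases j with j | j <;> simp [hy]

lemma vecMul_L13_eq_iff (M1 M1' : Matrix (Fin u1) (Fin p) F)
    (M3 M3' : Matrix (Fin u1) (Fin m) F) (M2 M2' : Matrix (Fin u2) (Fin m) F)
    (x : Fin u1 ⊕ Fin u2 → F) :
    x ᵥ* L13 (Δ := Δ) M1 M3 M2 = x ᵥ* L13 (Δ := Δ) M1' M3' M2' ↔
      x ᵥ* Matrix.fromBlocks (M1 - M1') (M3 - M3') 0 (M2 - M2') = 0 := by
  rw [vecMul_L13, vecMul_L13, Matrix.vecMul_fromBlocks]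
  constructor
  · intro h
    have h1 : (x ∘ Sum.inl) ᵥ* M1 = (x ∘ Sum.inl) ᵥ* M1' := by
      funext j; simpa using congrFun h (Sum.inl (Sum.inr (Sum.inr j)))
    have h2 : (x ∘ Sum.inl) ᵥ* M3 + (x ∘ Sum.inr) ᵥ* M2
        = (x ∘ Sum.inl) ᵥ* M3' + (x ∘ Sum.inr) ᵥ* M2' := by
      funext j; simpa using congrFun h (Sum.inr (Sum.inr j))
    funext j
    rcases j with j | j
    · simp [Matrix.vecMul_sub, h1]
    · have h2j := congrFun h2 j
      simp only [Pi.add_apply] at h2j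
      simp only [Sum.elim_inr, Pi.add_apply, Matrix.vecMul_sub, Pi.sub_apply, Pi.zero_apply]
      linear_combination h2j
  · intro h
    have h1 : (x ∘ Sum.inl) ᵥ* (M1 - M1') = 0 := by
      funext j; simpa using congrFun h (Sum.inl j)
    have h2 : (x ∘ Sum.inl) ᵥ* (M3 - M3') + (x ∘ Sum.inr) ᵥ* (M2 - M2') = 0 := by
      funext j; simpa using congrFun h (Sum.inr j)
    funext j
    rcases j with (j | j | j) | (j | j)
    · rfl
    · rfl
    · have h1j := congrFun h1 j
      simp only [Matrix.vecMul_sub, Pi.sub_apply, Pi.zero_apply] at h1j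
      simp only [Sum.elim_inl, Sum.elim_inr]
      linear_combination h1j
    · rfl
    · have h2j := congrFun h2 j
      simp only [Matrix.vecMul_sub, Pi.add_apply, Pi.sub_apply, Pi.zero_apply] at h2j
      simp only [Sum.elim_inr, Pi.add_apply]
      linear_combination h2j

end Helpers

/-- lifting Ferrers-diagram rank metric codes with the special-form
identifying vector (Lemma 3.6): (i) the lifted subspaces are distinct `k`-dimensional
subspaces with pairwise subspace distance `≥ d`; (ii) they meet `S1` in dimension `u2`
and `S2` in dimension `u1 − rank M3`. -/
theorem lifted_fdrm_inserting
    (F : Type*) [Field F] [Fintype F] (d Δ u1 p u2 m k : ℕ)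
    (hd : 0 < d) (hd2 : 2 ∣ d) (hk : u1 + u2 = k)
    (hu1 : d / 2 ≤ u1) (hu2 : d / 2 ≤ u2) :
    -- (i)
    (∀ T : Set (Matrix (Fin u1) (Fin p) F ×
        Matrix (Fin u1) (Fin m) F × Matrix (Fin u2) (Fin m) F),
      (∀ t ∈ T, ∀ t' ∈ T, t ≠ t' →
        d / 2 ≤ (Matrix.fromBlocks t.1 t.2.1 0 t.2.2 -
          Matrix.fromBlocks t'.1 t'.2.1 0 t'.2.2).rank) →
      (∀ t ∈ T, ∀ t' ∈ T, t ≠ t' →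
        (L13 (Δ := Δ) t.1 t.2.1 t.2.2 : Matrix _ _ F) ≠ L13 (Δ := Δ) t'.1 t'.2.1 t'.2.2) ∧
      (∀ t ∈ T, Module.finrank F ↥(rowSpace (L13 (Δ := Δ) t.1 t.2.1 t.2.2)) = k) ∧
      (∀ t ∈ T, ∀ t' ∈ T, t ≠ t' →
        d ≤ 2 * k - 2 * Module.finrank F
          ↥(rowSpace (L13 (Δ := Δ) t.1 t.2.1 t.2.2) ⊓
            rowSpace (L13 (Δ := Δ) t'.1 t'.2.1 t'.2.2)))) ∧
    -- (ii)
    (∀ (M1 : Matrix (Fin u1) (Fin p) F) (M3 : Matrix (Fin u1) (Fin m) F)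
        (M2 : Matrix (Fin u2) (Fin m) F),
      Module.finrank F ↥(rowSpace (L13 (Δ := Δ) M1 M3 M2) ⊓ S1' F Δ u1 p u2 m) = u2 ∧
      Module.finrank F ↥(rowSpace (L13 (Δ := Δ) M1 M3 M2) ⊓ S2' F Δ u1 p u2 m)
        = u1 - M3.rank ∧
      (M3.rank ≤ u1 - d / 2 →
        d / 2 ≤ Module.finrank F
          ↥(rowSpace (L13 (Δ := Δ) M1 M3 M2) ⊓ S2' F Δ u1 p u2 m))) := by
  constructor
  · -- part (i)
    intro T hT
    refine ⟨?_, ?_, ?_⟩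
    · -- distinctness
      rintro ⟨A1, A3, A2⟩ hA ⟨B1, B3, B2⟩ hB hne h
      apply hne
      have e1 : A1 = B1 := by
        ext i j
        have := congrFun (congrFun h (Sum.inl i)) (Sum.inl (Sum.inr (Sum.inr j)))
        simpa [L13] using this
      have e3 : A3 = B3 := by
        ext i j
        have := congrFun (congrFun h (Sum.inl i)) (Sum.inr (Sum.inr j))
        simpa [L13] using this
      have e2 : A2 = B2 := by
        ext i j
        have := congrFun (congrFun h (Sum.inr i)) (Sum.inr (Sum.inr j))
        simpa [L13] using this
      rw [e1, e2, e3]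
    · -- dimension k
      rintro ⟨A1, A3, A2⟩ hA
      unfold rowSpace
      rw [LinearMap.finrank_range_of_inj (L13_vecMulLinear_injective A1 A3 A2)]
      simp [Module.finrank_pi, hk]
    · -- distance
      rintro ⟨A1, A3, A2⟩ hA ⟨B1, B3, B2⟩ hB hne
      set N := Matrix.fromBlocks (A1 - B1) (A3 - B3)
        (0 : Matrix (Fin u2) (Fin p) F) (A2 - B2) with hN
      have hinter : rowSpace (L13 (Δ := Δ) A1 A3 A2) ⊓ rowSpace (L13 (Δ := Δ) B1 B3 B2)
          = Submodule.map (L13 (Δ := Δ) A1 A3 A2).vecMulLinear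
              (LinearMap.ker N.vecMulLinear) := by
        ext v
        simp only [Submodule.mem_inf, rowSpace, LinearMap.mem_range, Submodule.mem_map,
          LinearMap.mem_ker, Matrix.vecMulLinear_apply]
        constructor
        · rintro ⟨⟨x, hx⟩, ⟨y, hy⟩⟩
          have hx' := hx
          have hy' := hy
          rw [vecMul_L13] at hx' hy'
          have hxy : x = y := by
            funext i
            rcases i with j | j
            · have h1 := congrFun hx' (Sum.inl (Sum.inr (Sum.inl j)))
              have h2 := congrFun hy' (Sum.inl (Sum.inr (Sum.inl j)))
              simp only [Sum.elim_inl, Sum.elim_inr, Function.comp_apply] at h1 h2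
              exact h1.trans h2.symm
            · have h1 := congrFun hx' (Sum.inr (Sum.inl j))
              have h2 := congrFun hy' (Sum.inr (Sum.inl j))
              simp only [Sum.elim_inl, Sum.elim_inr, Function.comp_apply] at h1 h2
              exact h1.trans h2.symm
          have hsame : x ᵥ* L13 (Δ := Δ) A1 A3 A2 = x ᵥ* L13 (Δ := Δ) B1 B3 B2 := by
            rw [hx]; rw [hxy]; exact hy.symm
          exact ⟨x, (vecMul_L13_eq_iff A1 B1 A3 B3 A2 B2 x).mp hsame, hx⟩
        · rintro ⟨x, hker, rfl⟩
          exact ⟨⟨x, rfl⟩, ⟨x, ((vecMul_L13_eq_iff A1 B1 A3 B3 A2 B2 x).mpr hker).symm⟩⟩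
      rw [hinter, finrank_map_of_injective _ (L13_vecMulLinear_injective A1 A3 A2)]
      have hrk := finrank_ker_vecMulLinear (F := F) N
      have hcard : Fintype.card (Fin u1 ⊕ Fin u2) = u1 + u2 := by simp
      have hd2' : d / 2 ≤ N.rank := by
        have hT' := hT ⟨A1, A3, A2⟩ hA ⟨B1, B3, B2⟩ hB hne
        have heq : Matrix.fromBlocks A1 A3 0 A2 -
            Matrix.fromBlocks B1 B3 (0 : Matrix (Fin u2) (Fin p) F) B2 = N := by
          ext i j
          rcases i with i | i <;> rcases j with j | j <;> simp [hN]
        rwa [heq] at hT'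
      omega
  · -- part (ii)
    intro M1 M3 M2
    have hinj := L13_vecMulLinear_injective (Δ := Δ) M1 M3 M2
    have hS1 : Module.finrank F
        ↥(rowSpace (L13 (Δ := Δ) M1 M3 M2) ⊓ S1' F Δ u1 p u2 m) = u2 := by
      unfold S1'
      rw [rowSpace_inf_ker, ker_comp_inl, finrank_map_of_injective _ hinj]
      have hsurj : Function.Surjective
          (LinearMap.funLeft F F (Sum.inl : Fin u1 → Fin u1 ⊕ Fin u2)) :=
        LinearMap.funLeft_surjective_of_injective F F _ Sum.inl_injective
      have hrn := LinearMap.finrank_range_add_finrank_ker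
        (LinearMap.funLeft F F (Sum.inl : Fin u1 → Fin u1 ⊕ Fin u2))
      rw [LinearMap.range_eq_top.mpr hsurj, finrank_top] at hrn
      simp only [Module.finrank_pi, Fintype.card_sum, Fintype.card_fin] at hrn
      omega
    have hM3 := finrank_ker_vecMulLinear (F := F) M3
    simp only [Fintype.card_fin] at hM3
    have hS2 : Module.finrank F
        ↥(rowSpace (L13 (Δ := Δ) M1 M3 M2) ⊓ S2' F Δ u1 p u2 m) = u1 - M3.rank := by
      unfold S2'
      rw [rowSpace_inf_ker, ker_comp_inr, finrank_map_of_injective _ hinj,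
        finrank_map_of_injective _ sumInlMap_injective]
      omega
    exact ⟨hS1, hS2, fun hr => by rw [hS2]; omega⟩
end
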